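/- Let π̂_T be the result of T power-iteration steps applied to the all-ones row vector 1, i.e. π̂_T = 1 · Σ_{ℓ=0}^{T-1} α(1-α)^ℓ P^ℓ. Then for every u_i ∈ U, the column sum satisfies Σ_{u_j ∈ U} π(u_j, u_i) ≤ max_{u_k ∈ U} π̂_T(u_k) + |U|·(1-α)^T. -/

import Mathlib

lemma pow_entry_props {U : Type*} [Fintype U] [DecidableEq U]
    (P : Matrix U U ℝ) (hnn : ∀ i j, 0 ≤ P i j) (hrow : ∀ i, ∑ j, P i j = 1) :
    ∀ ℓ : ℕ, (∀ i j, 0 ≤ (P ^ ℓ) i j) ∧ (∀ i, ∑ j, (P ^ ℓ) i j = 1) := by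
  intro ℓ
  induction ℓ with
  | zero =>
    constructor
    · intro i j
      simp [Matrix.one_apply]
      positivity
    · intro i
      simp [Matrix.one_apply]
  | succ n ih =>
    obtain ⟨h1, h2⟩ := ih
    constructor
    · intro i j
      rw [pow_succ, Matrix.mul_apply]
      exact Finset.sum_nonneg fun k _ => mul_nonneg (h1 i k) (hnn k j)
    · intro i
      simp only [pow_succ, Matrix.mul_apply]
      rw [Finset.sum_comm]
      calc ∑ k, ∑ j, (P ^ n) i k * P k j
          = ∑ k, (P ^ n) i k * ∑ j, P k j := by
            simp [Finset.mul_sum]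
        _ = 1 := by simp [hrow, h2]

lemma pow_entry_le_one {U : Type*} [Fintype U] [DecidableEq U]
    (P : Matrix U U ℝ) (hnn : ∀ i j, 0 ≤ P i j) (hrow : ∀ i, ∑ j, P i j = 1)
    (ℓ : ℕ) (i j : U) : (P ^ ℓ) i j ≤ 1 := by
  obtain ⟨h1, h2⟩ := pow_entry_props P hnn hrow ℓ
  calc (P ^ ℓ) i j ≤ ∑ k, (P ^ ℓ) i k :=
        Finset.single_le_sum (fun k _ => h1 i k) (Finset.mem_univ j)
    _ = 1 := h2 i

/-- Upper bound on column sums of the AHPP matrix via power iteration on the all-ones vector. -/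
theorem ahpp_column_sum_bound {U : Type*} [Fintype U] [DecidableEq U] [Nonempty U]
    (P : Matrix U U ℝ) (α : ℝ) (hα0 : 0 < α) (hα1 : α < 1)
    (hnn : ∀ i j, 0 ≤ P i j) (hle : ∀ i j, P i j ≤ 1) (hrow : ∀ i, ∑ j, P i j = 1)
    (T : ℕ) :
    ∀ ui : U,
      (∑ uj, ∑' ℓ : ℕ, α * (1 - α) ^ ℓ * (P ^ ℓ) uj ui)
        ≤ (Finset.univ.sup' Finset.univ_nonempty
            (fun uk => ∑ uj, ∑ ℓ ∈ Finset.range T, α * (1 - α) ^ ℓ * (P ^ ℓ) uj uk))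
          + (Fintype.card U : ℝ) * (1 - α) ^ T := by
  intro ui
  have h1α0 : 0 ≤ 1 - α := by linarith
  have h1α1 : 1 - α < 1 := by linarith
  have hpnn := fun ℓ => (pow_entry_props P hnn hrow ℓ).1
  have hple := pow_entry_le_one P hnn hrow
  -- summability
  have hgeo : Summable (fun ℓ : ℕ => α * (1 - α) ^ ℓ) :=
    (summable_geometric_of_lt_one h1α0 h1α1).mul_left α
  have hsumm : ∀ uj : U, Summable (fun ℓ : ℕ => α * (1 - α) ^ ℓ * (P ^ ℓ) uj ui) := by
    intro uj
    apply Summable.of_nonneg_of_le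
      (fun ℓ => mul_nonneg (by positivity) (hpnn ℓ uj ui)) _ hgeo
    intro ℓ
    exact mul_le_of_le_one_right (by positivity) (hple ℓ uj ui)
  -- split each tsum at T
  have hsplit : ∀ uj : U,
      (∑' ℓ : ℕ, α * (1 - α) ^ ℓ * (P ^ ℓ) uj ui)
        = (∑ ℓ ∈ Finset.range T, α * (1 - α) ^ ℓ * (P ^ ℓ) uj ui)
          + ∑' ℓ : ℕ, α * (1 - α) ^ (ℓ + T) * (P ^ (ℓ + T)) uj ui := by
    intro uj
    exact (Summable.sum_add_tsum_nat_add T (hsumm uj)).symm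
  have htail : ∀ uj : U,
      (∑' ℓ : ℕ, α * (1 - α) ^ (ℓ + T) * (P ^ (ℓ + T)) uj ui) ≤ (1 - α) ^ T := by
    intro uj
    have hgeo' : Summable (fun ℓ : ℕ => α * (1 - α) ^ (ℓ + T)) := by
      exact ((summable_geometric_of_lt_one h1α0 h1α1).mul_left α).comp_injective
        (add_left_injective T)
    have hle' : (∑' ℓ : ℕ, α * (1 - α) ^ (ℓ + T) * (P ^ (ℓ + T)) uj ui)
        ≤ ∑' ℓ : ℕ, α * (1 - α) ^ (ℓ + T) := by
      apply Summable.tsum_le_tsum _ ((hsumm uj).comp_injective (add_left_injective T)) hgeo'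
      intro ℓ
      simp only [Function.comp]
      exact mul_le_of_le_one_right (by positivity) (hple (ℓ + T) uj ui)
    have heq : (∑' ℓ : ℕ, α * (1 - α) ^ (ℓ + T)) = (1 - α) ^ T := by
      have : (∑' ℓ : ℕ, α * (1 - α) ^ (ℓ + T))
          = α * (1 - α) ^ T * ∑' ℓ : ℕ, (1 - α) ^ ℓ := by
        rw [← tsum_mul_left]
        congr 1; ext ℓ; ring
      rw [this, tsum_geometric_of_lt_one h1α0 h1α1]
      rw [sub_sub_cancel, mul_comm, ← mul_assoc, inv_mul_cancel₀ hα0.ne', one_mul]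
    linarith
  calc (∑ uj, ∑' ℓ : ℕ, α * (1 - α) ^ ℓ * (P ^ ℓ) uj ui)
      = (∑ uj, ∑ ℓ ∈ Finset.range T, α * (1 - α) ^ ℓ * (P ^ ℓ) uj ui)
        + ∑ uj : U, ∑' ℓ : ℕ, α * (1 - α) ^ (ℓ + T) * (P ^ (ℓ + T)) uj ui := by
        rw [← Finset.sum_add_distrib]
        exact Finset.sum_congr rfl fun uj _ => hsplit uj
    _ ≤ (Finset.univ.sup' Finset.univ_nonempty
          (fun uk => ∑ uj, ∑ ℓ ∈ Finset.range T, α * (1 - α) ^ ℓ * (P ^ ℓ) uj uk))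
        + (Fintype.card U : ℝ) * (1 - α) ^ T := by
        apply add_le_add
        · exact Finset.le_sup'
            (fun uk => ∑ uj, ∑ ℓ ∈ Finset.range T, α * (1 - α) ^ ℓ * (P ^ ℓ) uj uk)
            (Finset.mem_univ ui)
        · calc (∑ uj : U, ∑' ℓ : ℕ, α * (1 - α) ^ (ℓ + T) * (P ^ (ℓ + T)) uj ui)
              ≤ ∑ _uj : U, (1 - α) ^ T := Finset.sum_le_sum fun uj _ => htail uj
            _ = (Fintype.card U : ℝ) * (1 - α) ^ T := by
              simp [Finset.sum_const, nsmul_eq_mul]
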